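/- Suppose x ∈ {0,1}^n is transformed into y by first deleting the bit at position d and then substituting (flipping) the bit at position e − δ of the resulting string, where δ = 1 if e > d and δ = 0 otherwise, and d ≠ e. Then f(x) − f(y) = d·x_d + Σ_{i=d}^{n−1} y_i + e·(2x_e − 1), where f(z) = Σ_i i·z_i (over the integers, before reduction modulo 3n+1). -/

import Mathlib

def b2i (b : Bool) : ℤ := if b then 1 else 0

def vt (l : List Bool) : ℤ :=
  (l.zipIdx.map (fun p => ((p.2 : ℤ) + 1) * b2i p.1)).sum

lemma b2i_not (v : Bool) : b2i (!v) = 1 - b2i v := by cases v <;> simp [b2i]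

lemma cnt_cons (c : Bool) (t : List Bool) :
    (((c :: t).count true : ℕ) : ℤ) = b2i c + (t.count true : ℤ) := by
  cases c <;> simp [List.count_cons, b2i] <;> ring

lemma vtFrom (t : List Bool) (k : ℕ) :
    ((t.zipIdx k).map (fun p => ((p.2 : ℤ) + 1) * b2i p.1)).sum
      = ((t.zipIdx 0).map (fun p => ((p.2 : ℤ) + 1) * b2i p.1)).sum
        + (k : ℤ) * (t.count true : ℤ) := by
  induction t generalizing k with
  | nil => simp
  | cons c t ih =>
    simp only [List.zipIdx_cons, List.map_cons, List.sum_cons]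
    rw [ih (k+1), ih 1, cnt_cons]
    push_cast
    ring

lemma vt_cons (c : Bool) (t : List Bool) :
    vt (c :: t) = b2i c + vt t + (t.count true : ℤ) := by
  unfold vt
  rw [List.zipIdx_cons]
  simp only [List.map_cons, List.sum_cons]
  rw [vtFrom t 1]
  show _ = _ + (t.zipIdx.map _).sum + _
  push_cast
  ring

lemma cnt_eraseIdx (l : List Bool) (a : ℕ) (h : a < l.length) :
    (l.count true : ℤ) = ((l.eraseIdx a).count true : ℤ) + b2i (l.getD a false) := by
  induction l generalizing a with
  | nil => simp at h
  | cons c t ih =>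
    cases a with
    | zero => rw [cnt_cons]; simp [List.eraseIdx]; ring
    | succ a =>
      simp only [List.length_cons, Nat.add_lt_add_iff_right] at h
      simp only [List.eraseIdx_cons_succ, List.getD_cons_succ]
      rw [cnt_cons, cnt_cons, ih a h]
      ring

lemma cnt_set (l : List Bool) (j : ℕ) (b : Bool) (h : j < l.length) :
    ((l.set j b).count true : ℤ) = (l.count true : ℤ) + b2i b - b2i (l.getD j false) := by
  induction l generalizing j with
  | nil => simp at h
  | cons c t ih =>
    cases j with
    | zero => simp only [List.set_cons_zero, List.getD_cons_zero]; rw [cnt_cons, cnt_cons]; ring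
    | succ j =>
      simp only [List.length_cons, Nat.add_lt_add_iff_right] at h
      simp only [List.set_cons_succ, List.getD_cons_succ]
      rw [cnt_cons, cnt_cons, ih j h]
      ring

lemma vt_eraseIdx (l : List Bool) (a : ℕ) (h : a < l.length) :
    vt l = vt (l.eraseIdx a) + ((a : ℤ) + 1) * b2i (l.getD a false)
      + ((l.drop (a+1)).count true : ℤ) := by
  induction l generalizing a with
  | nil => simp at h
  | cons c t ih =>
    cases a with
    | zero => simp only [List.eraseIdx_cons_zero, List.getD_cons_zero, List.drop_succ_cons,
        List.drop_zero]; rw [vt_cons]; push_cast; ring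
    | succ a =>
      simp only [List.length_cons, Nat.add_lt_add_iff_right] at h
      simp only [List.eraseIdx_cons_succ, List.getD_cons_succ, List.drop_succ_cons]
      rw [vt_cons, vt_cons, cnt_eraseIdx t a h]
      push_cast
      linear_combination ih a h

lemma vt_set (l : List Bool) (j : ℕ) (b : Bool) (h : j < l.length) :
    vt (l.set j b) = vt l + ((j : ℤ) + 1) * (b2i b - b2i (l.getD j false)) := by
  induction l generalizing j with
  | nil => simp at h
  | cons c t ih =>
    cases j with
    | zero => simp only [List.set_cons_zero, List.getD_cons_zero]; rw [vt_cons, vt_cons]; ring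
    | succ j =>
      simp only [List.length_cons, Nat.add_lt_add_iff_right] at h
      simp only [List.set_cons_succ, List.getD_cons_succ]
      rw [vt_cons, vt_cons, cnt_set t j b h]
      push_cast
      linear_combination ih j h

lemma drop_eraseIdx (l : List Bool) (a : ℕ) :
    (l.eraseIdx a).drop a = l.drop (a+1) := by
  induction l generalizing a with
  | nil => simp
  | cons c t ih =>
    cases a with
    | zero => simp [List.eraseIdx]
    | succ a => simp only [List.eraseIdx_cons_succ, List.drop_succ_cons]; exact ih a

lemma getD_eraseIdx_ge (l : List Bool) (a j : ℕ) (haj : a ≤ j) (hj : j + 1 < l.length) :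
    (l.eraseIdx a).getD j false = l.getD (j+1) false := by
  have h1 : j < (l.eraseIdx a).length := by rw [List.length_eraseIdx]; split <;> omega
  rw [List.getD_eq_getElem _ _ h1, List.getD_eq_getElem _ _ hj, List.getElem_eraseIdx,
    dif_neg (by omega)]

lemma getD_eraseIdx_lt (l : List Bool) (a j : ℕ) (haj : j < a) (hj : j < l.length - 1) :
    (l.eraseIdx a).getD j false = l.getD j false := by
  have h1 : j < (l.eraseIdx a).length := by rw [List.length_eraseIdx]; split <;> omega
  rw [List.getD_eq_getElem _ _ h1, List.getD_eq_getElem _ _ (by omega), List.getElem_eraseIdx,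
    dif_pos haj]

theorem stmt_14 (n : ℕ) (x : List Bool) (hx : x.length = n)
    (d e : ℕ) (hd1 : 1 ≤ d) (hdn : d ≤ n) (he1 : 1 ≤ e) (hen : e ≤ n)
    (hde : d ≠ e)
    (x' : List Bool) (hx' : x' = x.eraseIdx (d - 1))
    (δ : ℕ) (hδ : δ = if d < e then 1 else 0)
    (y : List Bool) (hy : y = x'.set (e - δ - 1) (! x.getD (e - 1) false)) :
    vt x - vt y =
      (d : ℤ) * b2i (x.getD (d - 1) false) + ((y.drop (d - 1)).count true : ℤ) +
        (e : ℤ) * (2 * b2i (x.getD (e - 1) false) - 1) := by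
  subst hx
  obtain ⟨a, rfl⟩ : ∃ a, d = a + 1 := ⟨d - 1, by omega⟩
  obtain ⟨b, rfl⟩ : ∃ b, e = b + 1 := ⟨e - 1, by omega⟩
  simp only [Nat.add_sub_cancel] at hx' hy
  have ha : a < x.length := by omega
  have hx'len : x'.length = x.length - 1 := by
    rw [hx', List.length_eraseIdx, if_pos ha]
  have h1 : vt x = vt x' + ((a : ℤ) + 1) * b2i (x.getD a false)
      + ((x.drop (a+1)).count true : ℤ) := by rw [hx']; exact vt_eraseIdx x a ha
  rcases lt_or_gt_of_ne hde with hlt | hgt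
  · -- a + 1 < b + 1, i.e. a < b
    obtain ⟨c, rfl⟩ : ∃ c, b = c + 1 := ⟨b - 1, by omega⟩
    have hδ' : δ = 1 := by rw [hδ]; exact if_pos (by omega)
    have hy' : y = x'.set c (! x.getD (c+1) false) := by rw [hy, hδ']; norm_num
    have hc1 : c + 1 + 1 < x.length + 1 := by omega
    have hclen : c < x'.length := by omega
    have hget : x'.getD c false = x.getD (c+1) false := by
      rw [hx']; exact getD_eraseIdx_ge x a c (by omega) (by omega)
    have h3 : vt y = vt x' + ((c : ℤ) + 1) *
        (b2i (! x.getD (c+1) false) - b2i (x.getD (c+1) false)) := by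
      rw [hy', vt_set _ _ _ hclen, hget]
    have h4 : y.drop a = (x.drop (a+1)).set (c - a) (! x.getD (c+1) false) := by
      rw [hy', List.drop_set, if_neg (by omega), hx', drop_eraseIdx]
    have hidx : (x.drop (a+1)).getD (c - a) false = x.getD (c+1) false := by
      have hlt' : c - a < (x.drop (a+1)).length := by rw [List.length_drop]; omega
      rw [List.getD_eq_getElem _ _ hlt', List.getD_eq_getElem _ _ (by omega),
        List.getElem_drop]
      congr 1
      omega
    have h6 : ((y.drop a).count true : ℤ) = ((x.drop (a+1)).count true : ℤ)
        + b2i (! x.getD (c+1) false) - b2i (x.getD (c+1) false) := by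
      rw [h4, cnt_set _ _ _ (by rw [List.length_drop]; omega), hidx]
    show vt x - vt y = ((a:ℕ)+1 : ℤ) * b2i (x.getD a false) + ((y.drop a).count true : ℤ)
        + ((c:ℕ)+1+1 : ℤ) * (2 * b2i (x.getD (c+1) false) - 1)
    rw [b2i_not] at h3 h6
    push_cast
    linear_combination h1 - h3 - h6
  · -- b + 1 < a + 1, i.e. b < a
    have hδ' : δ = 0 := by rw [hδ]; exact if_neg (by omega)
    have hy' : y = x'.set b (! x.getD b false) := by
      rw [hy, hδ']; norm_num
    have hblen : b < x'.length := by omega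
    have hget : x'.getD b false = x.getD b false := by
      rw [hx']; exact getD_eraseIdx_lt x a b (by omega) (by omega)
    have h3 : vt y = vt x' + ((b : ℤ) + 1) *
        (b2i (! x.getD b false) - b2i (x.getD b false)) := by
      rw [hy', vt_set _ _ _ hblen, hget]
    have h4 : y.drop a = x.drop (a+1) := by
      rw [hy', List.drop_set, if_pos (by omega), hx', drop_eraseIdx]
    show vt x - vt y = ((a:ℕ)+1 : ℤ) * b2i (x.getD a false) + ((y.drop a).count true : ℤ)
        + ((b:ℕ)+1 : ℤ) * (2 * b2i (x.getD b false) - 1)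
    rw [b2i_not] at h3
    rw [h4]
    push_cast
    linear_combination h1 - h3
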